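/- arXiv:2507.12766 — 3 statements merged into one kernel-verified Lean document; each statement's English description precedes it below -/
import Mathlib

section
/- Existence of auxiliary variables dominating the elliptic PINN loss (Theorem 2.2). For all parameters W₁∈ℝ^{M×d}, b₁∈ℝ^M, W₂∈ℝ^{M×M}, b₂∈ℝ^M, W₃∈ℝ^{1×M}, b₃∈ℝ, there exist auxiliary variables a₁, a₂, {d_{1i}}_{i=1}^d, {d_{2i}}_{i=1}^d, {q_i}_{i=1}^d in ℝ^{M×N} such that J^e_S ≤ J^e. -/
open scoped BigOperators

noncomputable section

/-- Partial derivative `∂_{x_i} f` at `x`. -/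
def pd {m : ℕ} (f : (Fin m → ℝ) → ℝ) (i : Fin m) (x : Fin m → ℝ) : ℝ :=
  fderiv ℝ f x (Pi.single i 1)

/-- Squared Euclidean norm of the `n`-th column of an `M × N` matrix. -/
def colSq {M N : ℕ} (A : Fin M → Fin N → ℝ) (n : Fin N) : ℝ := ∑ j, (A j n) ^ 2

/-- Squared Frobenius norm of an `M × N` matrix. -/
def froSq {M N : ℕ} (A : Fin M → Fin N → ℝ) : ℝ := ∑ n, colSq A n

/-- Squared Frobenius norm of a row vector (`1 × N` matrix). -/
def vSq {N : ℕ} (v : Fin N → ℝ) : ℝ := ∑ n, (v n) ^ 2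

/-- Entrywise sup-norm `|v|_∞` of a row vector. -/
def nsup {N : ℕ} (v : Fin N → ℝ) : ℝ := ⨆ n, |v n|

/-- Weighted squared norm `‖A‖_D²`, where `Dsq n = D(n,n)²` are the squared diagonal
entries of the diagonal weight matrix `D`. -/
def wSq {M N : ℕ} (Dsq : Fin N → ℝ) (A : Fin M → Fin N → ℝ) : ℝ := ∑ n, Dsq n * colSq A n

/-- The constant `C₁ = max{B_{σ'}·max{1,B_{σ'}}, C_{σ'}·max{1,B_{σ'},C_σ}}`. -/
def constC1 (Cσ Cσ' Bσ' : ℝ) : ℝ :=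
  max (Bσ' * max 1 Bσ') (Cσ' * max (max 1 Bσ') Cσ)

/-- The constant `C₂`. -/
def constC2 (Cσ' Cσ'' Bσ' Bσ'' : ℝ) : ℝ :=
  max (Bσ'' * max (max (max (max 1 Bσ') Cσ') (Bσ' ^ 2)) (Bσ' * Cσ'))
    (max 1 Cσ' * max Cσ' (Bσ' * Cσ''))

/-- The constant `C = max{1, 2C_σ², 2C_σ⁴, 5C₁², 14C₂²}`. -/
def constC (Cσ Cσ' Cσ'' Bσ' Bσ'' : ℝ) : ℝ :=
  max (max (max (max 1 (2 * Cσ ^ 2)) (2 * Cσ ^ 4)) (5 * constC1 Cσ Cσ' Bσ' ^ 2))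
    (14 * constC2 Cσ' Cσ'' Bσ' Bσ'' ^ 2)

/-- linear combination CLM -/
def lc {d : ℕ} (w : Fin d → ℝ) : (Fin d → ℝ) →L[ℝ] ℝ :=
  ∑ i, w i • ContinuousLinearMap.proj i

@[simp] lemma lc_apply {d : ℕ} (w : Fin d → ℝ) (v : Fin d → ℝ) :
    lc w v = ∑ i, w i * v i := by
  simp [lc]

@[simp] lemma lc_single {d : ℕ} (w : Fin d → ℝ) (i : Fin d) :
    lc w (Pi.single i 1) = w i := by
  simp [lc_apply, Pi.single_apply, Finset.sum_ite_eq', mul_comm]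

lemma hasFDerivAt_lin {d : ℕ} (w : Fin d → ℝ) (b : ℝ) (y : Fin d → ℝ) :
    HasFDerivAt (fun y : Fin d → ℝ => (∑ i, w i * y i) + b) (lc w) y := by
  have h : (fun y : Fin d → ℝ => lc w y + b) = fun y => (∑ i, w i * y i) + b := by
    funext y; simp
  exact h ▸ ((lc w).hasFDerivAt.add_const b)

def nsqclm {d : ℕ} (y : Fin d → ℝ) : (Fin d → ℝ) →L[ℝ] ℝ :=
  ∑ i', (y i' • (ContinuousLinearMap.proj i' : (Fin d → ℝ) →L[ℝ] ℝ)
    + y i' • (ContinuousLinearMap.proj i' : (Fin d → ℝ) →L[ℝ] ℝ))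

lemma hasFDerivAt_nsq {d : ℕ} (y : Fin d → ℝ) :
    HasFDerivAt (fun y : Fin d → ℝ => (∑ i', y i' ^ 2) - 1) (nsqclm y) y := by
  have h : ∀ i' : Fin d, HasFDerivAt (fun y : Fin d → ℝ => y i' ^ 2)
      (y i' • (ContinuousLinearMap.proj i' : (Fin d → ℝ) →L[ℝ] ℝ)
        + y i' • (ContinuousLinearMap.proj i' : (Fin d → ℝ) →L[ℝ] ℝ)) y := by
    intro i'
    have hp := (ContinuousLinearMap.proj (R := ℝ) (φ := fun _ : Fin d => ℝ) i').hasFDerivAt (x := y)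
    simpa [pow_two] using hp.fun_mul hp
  unfold nsqclm
  exact (HasFDerivAt.fun_sum (fun i' _ => h i')).sub_const (1:ℝ)

@[simp] lemma nsqclm_single {d : ℕ} (y : Fin d → ℝ) (i : Fin d) :
    nsqclm y (Pi.single i 1) = 2 * y i := by
  simp only [nsqclm, ContinuousLinearMap.sum_apply, ContinuousLinearMap.add_apply,
    ContinuousLinearMap.smul_apply, ContinuousLinearMap.proj_apply, smul_eq_mul,
    Pi.single_apply, mul_ite, mul_one, mul_zero, ← Finset.sum_add_distrib, ite_add_ite,
    add_zero]
  rw [Finset.sum_ite_eq' Finset.univ i (fun x => y x + y x)]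
  simp
  ring

/-- Data of the elliptic PINN model with a three-layer fully connected network:
activation `σ`, PDE coefficient `c`, feature points `X` (columns `x_n`), data `Y`,
and network parameters `W₁, b₁, W₂, b₂, W₃, b₃`. -/
structure EllData (d M N : ℕ) where
  σ : ℝ → ℝ
  c : (Fin d → ℝ) → ℝ
  X : Fin d → Fin N → ℝ
  Y : Fin N → ℝ
  W1 : Fin M → Fin d → ℝ
  b1 : Fin M → ℝ
  W2 : Fin M → Fin M → ℝ
  b2 : Fin M → ℝ
  W3 : Fin M → ℝ
  b3 : ℝ

/-- Auxiliary variables of the elliptic LySep model: `a₁, a₂` and, for each `i`,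
`d_{1i}, d_{2i}, q_i`, all in `ℝ^{M×N}`. -/
structure EllAux (d M N : ℕ) where
  a1 : Fin M → Fin N → ℝ
  a2 : Fin M → Fin N → ℝ
  d1 : Fin d → Fin M → Fin N → ℝ
  d2 : Fin d → Fin M → Fin N → ℝ
  q  : Fin d → Fin M → Fin N → ℝ

namespace EllData

variable {d M N : ℕ} (P : EllData d M N) (A : EllAux d M N)

/-- `σ'` -/
def σ' : ℝ → ℝ := deriv P.σ

/-- `σ''` -/
def σ'' : ℝ → ℝ := deriv (deriv P.σ)

/-- the `n`-th feature point `x_n` -/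
def x (n : Fin N) : Fin d → ℝ := fun i => P.X i n

/-- the three-layer network `φ(x;θ) = W₃σ(W₂σ(W₁x+b₁)+b₂)+b₃` -/
def phi (y : Fin d → ℝ) : ℝ :=
  (∑ j, P.W3 j * P.σ ((∑ k, P.W2 j k * P.σ ((∑ i, P.W1 k i * y i) + P.b1 k)) + P.b2 j)) + P.b3

/-- `ψ_e(x;θ) = (‖x‖₂² − 1)φ(x;θ)` -/
def psiE (y : Fin d → ℝ) : ℝ := ((∑ i, (y i) ^ 2) - 1) * P.phi y

/-- the `n`-th entry of the PINN residual `Σ_i ∂_{x_i}(c·∂_{x_i}ψ_e)(X) − Y` -/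
def pinnRes (n : Fin N) : ℝ :=
  (∑ i, pd (fun y => P.c y * pd P.psiE i y) i (P.x n)) - P.Y n

/-- the PINN loss `J^e` -/
def Je : ℝ := (1 / (N : ℝ)) * ∑ n, (P.pinnRes n) ^ 2

/-- `c(X)` -/
def cX : Fin N → ℝ := fun n => P.c (P.x n)

/-- `∂_{x_i} c(X)` -/
def dcX (i : Fin d) : Fin N → ℝ := fun n => pd P.c i (P.x n)

/-- `X̂`, the row vector of `‖x_n‖₂²` -/
def Xhat : Fin N → ℝ := fun n => ∑ i, (P.X i n) ^ 2

/-- `K^e = 2(d·c(X) + Σ_i X(i,:)*∂_{x_i}c(X))` -/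
def Ke : Fin N → ℝ := fun n => 2 * ((d : ℝ) * P.cX n + ∑ i, P.X i n * P.dcX i n)

/-- `K̂^e = c(X)*(X̂−1)` -/
def Khat : Fin N → ℝ := fun n => P.cX n * (P.Xhat n - 1)

/-- `K^e_i = 4X(i,:)*c(X) + ∂_{x_i}c(X)*(X̂−1)` -/
def Ki (i : Fin d) : Fin N → ℝ := fun n => 4 * P.X i n * P.cX n + P.dcX i n * (P.Xhat n - 1)

/-- `‖W₃‖_F²` -/
def w3sq : ℝ := ∑ j, (P.W3 j) ^ 2

/-- `‖W₂‖_F²` -/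
def w2sq : ℝ := ∑ j, ∑ k, (P.W2 j k) ^ 2

/-- `‖W₁(:,i)‖₂²` -/
def w1colSq (i : Fin d) : ℝ := ∑ j, (P.W1 j i) ^ 2

/-- the `n`-th entry of the LySep residual
`K^e*(W₃σ(a₂)+b₃𝟙ᵀ) + Σ_i K^e_i*(W₃(σ'(a₂)*d_{2i})) + K̂^e*Σ_i W₃(σ''(a₂)*d_{2i}*d_{2i}+σ'(a₂)*q_i) − Y` -/
def sRes (n : Fin N) : ℝ :=
  P.Ke n * ((∑ j, P.W3 j * P.σ (A.a2 j n)) + P.b3)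
    + (∑ i, P.Ki i n * ∑ j, P.W3 j * (P.σ' (A.a2 j n) * A.d2 i j n))
    + P.Khat n *
        ∑ i, ∑ j, P.W3 j * (P.σ'' (A.a2 j n) * A.d2 i j n * A.d2 i j n + P.σ' (A.a2 j n) * A.q i j n)
    - P.Y n

/-- constraint residual `W₁X + b₁𝟙ᵀ − a₁` -/
def Ra1 : Fin M → Fin N → ℝ := fun j n => (∑ i, P.W1 j i * P.X i n) + P.b1 j - A.a1 j n

/-- constraint residual `W₂σ(a₁) + b₂𝟙ᵀ − a₂` -/
def Ra2 : Fin M → Fin N → ℝ := fun j n => (∑ k, P.W2 j k * P.σ (A.a1 k n)) + P.b2 j - A.a2 j n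

/-- constraint residual `W₁(:,i)𝟙ᵀ − d_{1i}` -/
def Rd1 (i : Fin d) : Fin M → Fin N → ℝ := fun j n => P.W1 j i - A.d1 i j n

/-- constraint residual `W₂(σ'(a₁)*d_{1i}) − d_{2i}` -/
def Rd2 (i : Fin d) : Fin M → Fin N → ℝ :=
  fun j n => (∑ k, P.W2 j k * (P.σ' (A.a1 k n) * A.d1 i k n)) - A.d2 i j n

/-- constraint residual `W₂(σ''(a₁)*d_{1i}*d_{1i}) − q_i` -/
def Rq (i : Fin d) : Fin M → Fin N → ℝ :=
  fun j n => (∑ k, P.W2 j k * (P.σ'' (A.a1 k n) * A.d1 i k n * A.d1 i k n)) - A.q i j n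

/-- `D_{a₂}¹(n,n)²` -/
def Da2_1sq (n : Fin N) : ℝ :=
  nsup P.Ke ^ 2 + ∑ i, (nsup (P.Ki i) ^ 2 * colSq (A.d2 i) n + nsup P.Khat ^ 2 * colSq (A.q i) n)

/-- `D_{a₂}^{2i}(n,n)²` -/
def Da2_2sq (i : Fin d) (n : Fin N) : ℝ := nsup P.Khat ^ 2 * colSq (A.d2 i) n

/-- `D_{a₁}^{2i}(n,n)²` -/
def Da1_2sq (i : Fin d) (n : Fin N) : ℝ := nsup P.Khat ^ 2 * colSq (A.d1 i) n

/-- `D_{a₁}^{3i}(n,n)²` -/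
def Da1_3sq (i : Fin d) (n : Fin N) : ℝ := P.Da1_2sq A i n + P.Da2_2sq A i n

/-- `D_{a₁}¹(n,n)²` -/
def Da1_1sq (n : Fin N) : ℝ :=
  P.Da2_1sq A n + ∑ i, (nsup (P.Ki i) ^ 2 * colSq (A.d1 i) n + P.Da1_2sq A i n * colSq (A.d2 i) n)

/-- `D_{d_{1i}}²(n,n)²` -/
def Dd1_2sq (i : Fin d) (n : Fin N) : ℝ := nsup (P.Ki i) ^ 2 + P.Da1_3sq A i n

/-- `D_{d_{2i}}¹(n,n)²` -/
def Dd2_1sq (i : Fin d) (n : Fin N) : ℝ := nsup (P.Ki i) ^ 2 + P.Da2_2sq A i n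

/-- the LySep loss `J^e_S` with self-adaptive weights `ω` and diagonal matrices `D`:
`ω_{a₁}¹ = ω_{d_{1i}}² = ‖W₃‖²‖W₂‖²`, `ω_{a₁}^{2i} = ω_{a₂}^{2i} = ω_{a₁}¹‖W₁(:,i)‖²`,
`ω_{a₁}^{3i} = ω_{a₁}^{2i}‖W₂‖²`, `ω_{a₂}¹ = ω_{d_{2i}}¹ = ‖W₃‖²`,
`ω_{d_{1i}}¹ = |K̂^e|_∞²(ω_{a₁}^{2i}+ω_{a₁}^{3i})`, `ω_{d_{2i}}² = |K̂^e|_∞²ω_{a₁}^{2i}`,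
`ω_{q_i} = |K̂^e|_∞²ω_{a₂}¹`, `D_{d_{1i}}¹ = D_{d_{2i}}² = I`. -/
def JeS : ℝ :=
  (1 / (N : ℝ)) *
    ((∑ n, (P.sRes A n) ^ 2)
      + P.w3sq * P.w2sq * wSq (P.Da1_1sq A) (P.Ra1 A)
      + (∑ i, P.w3sq * P.w2sq * P.w1colSq i * wSq (P.Da1_2sq A i) (P.Ra1 A))
      + (∑ i, P.w3sq * P.w2sq * P.w1colSq i * P.w2sq * wSq (P.Da1_3sq A i) (P.Ra1 A))
      + P.w3sq * wSq (P.Da2_1sq A) (P.Ra2 A)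
      + (∑ i, P.w3sq * P.w2sq * P.w1colSq i * wSq (P.Da2_2sq A i) (P.Ra2 A))
      + (∑ i, nsup P.Khat ^ 2 *
          (P.w3sq * P.w2sq * P.w1colSq i + P.w3sq * P.w2sq * P.w1colSq i * P.w2sq) *
          froSq (P.Rd1 A i))
      + (∑ i, P.w3sq * P.w2sq * wSq (P.Dd1_2sq A i) (P.Rd1 A i))
      + (∑ i, P.w3sq * wSq (P.Dd2_1sq A i) (P.Rd2 A i))
      + (∑ i, nsup P.Khat ^ 2 * (P.w3sq * P.w2sq * P.w1colSq i) * froSq (P.Rd2 A i))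
      + (∑ i, nsup P.Khat ^ 2 * P.w3sq * froSq (P.Rq A i)))

/-- canonical auxiliary variable `a₁ = W₁X + b₁𝟙ᵀ` -/
def cA1 : Fin M → Fin N → ℝ := fun j n => (∑ i, P.W1 j i * P.X i n) + P.b1 j

/-- canonical auxiliary variable `a₂ = W₂σ(a₁) + b₂𝟙ᵀ` -/
def cA2 : Fin M → Fin N → ℝ := fun j n => (∑ k, P.W2 j k * P.σ (P.cA1 k n)) + P.b2 j

/-- canonical auxiliary variable `d_{1i} = W₁(:,i)𝟙ᵀ` -/
def cD1 (i : Fin d) : Fin M → Fin N → ℝ := fun j _ => P.W1 j i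

/-- canonical auxiliary variable `d_{2i} = W₂(σ'(a₁)*d_{1i})` -/
def cD2 (i : Fin d) : Fin M → Fin N → ℝ :=
  fun j n => ∑ k, P.W2 j k * (P.σ' (P.cA1 k n) * P.W1 k i)

/-- canonical auxiliary variable `q_i = W₂(σ''(a₁)*d_{1i}*d_{1i})` -/
def cQ (i : Fin d) : Fin M → Fin N → ℝ :=
  fun j n => ∑ k, P.W2 j k * (P.σ'' (P.cA1 k n) * P.W1 k i * P.W1 k i)

/-- the canonical auxiliary variables -/
def canonAux : EllAux d M N := ⟨P.cA1, P.cA2, P.cD1, P.cD2, P.cQ⟩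

end EllData


lemma alg_elliptic (d : ℕ) (Φ cc H : ℝ) (Xv g A B : Fin d → ℝ) :
    2 * ((d : ℝ) * cc + ∑ i, Xv i * g i) * Φ
      + (∑ i, (4 * Xv i * cc + g i * (H - 1)) * A i)
      + cc * (H - 1) * (∑ i, B i)
    = ∑ i, (g i * (2 * Xv i * Φ + (H - 1) * A i)
        + cc * (2 * Φ + 4 * Xv i * A i + (H - 1) * B i)) := by
  have h1 : 2 * ((d : ℝ) * cc + ∑ i, Xv i * g i) * Φ
      = (∑ _i : Fin d, 2 * cc * Φ) + ∑ i, 2 * (Xv i * g i) * Φ := by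
    rw [Finset.sum_const, Finset.card_univ, Fintype.card_fin, nsmul_eq_mul,
      Finset.sum_congr rfl (fun i (_ : i ∈ Finset.univ) =>
        show 2 * (Xv i * g i) * Φ = Xv i * g i * (2 * Φ) from by ring),
      ← Finset.sum_mul]
    ring
  rw [h1, Finset.mul_sum, ← Finset.sum_add_distrib, ← Finset.sum_add_distrib,
    ← Finset.sum_add_distrib]
  exact Finset.sum_congr rfl fun i _ => by ring

namespace EllData

variable {d M N : ℕ} (P : EllData d M N)

/-- first pre-activation as a function of `y` -/
def uf (k : Fin M) (y : Fin d → ℝ) : ℝ := (∑ i, P.W1 k i * y i) + P.b1 k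

/-- second pre-activation as a function of `y` -/
def a2f (j : Fin M) (y : Fin d → ℝ) : ℝ := (∑ k, P.W2 j k * P.σ (P.uf k y)) + P.b2 j

def D2f (i : Fin d) (j : Fin M) (y : Fin d → ℝ) : ℝ :=
  ∑ k, P.W2 j k * (P.σ' (P.uf k y) * P.W1 k i)

def Qf (i : Fin d) (j : Fin M) (y : Fin d → ℝ) : ℝ :=
  ∑ k, P.W2 j k * (P.σ'' (P.uf k y) * P.W1 k i * P.W1 k i)

def phipf (i : Fin d) (y : Fin d → ℝ) : ℝ := ∑ j, P.W3 j * (P.σ' (P.a2f j y) * P.D2f i j y)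

def phippf (i : Fin d) (y : Fin d → ℝ) : ℝ :=
  ∑ j, P.W3 j * (P.σ'' (P.a2f j y) * P.D2f i j y * P.D2f i j y
    + P.σ' (P.a2f j y) * P.Qf i j y)

lemma hasFDerivAt_uf (k : Fin M) (y : Fin d → ℝ) :
    HasFDerivAt (P.uf k) (lc (fun i => P.W1 k i)) y :=
  hasFDerivAt_lin _ _ y

lemma sigma_diff (hσ : ContDiff ℝ 2 P.σ) : Differentiable ℝ P.σ :=
  hσ.differentiable (by norm_num)

lemma sigma'_diff (hσ : ContDiff ℝ 2 P.σ) : Differentiable ℝ P.σ' := by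
  have h2 : ContDiff ℝ ((1 : WithTop ℕ∞) + 1) P.σ :=
    (by norm_num : ((1 : WithTop ℕ∞) + 1) = 2) ▸ hσ
  exact ((contDiff_succ_iff_deriv.mp h2).2.2).differentiable one_ne_zero

lemma hasFDerivAt_s1 (hσ : ContDiff ℝ 2 P.σ) (k : Fin M) (y : Fin d → ℝ) :
    HasFDerivAt (fun y => P.σ (P.uf k y))
      (P.σ' (P.uf k y) • lc (fun i => P.W1 k i)) y :=
  ((P.sigma_diff hσ _).hasDerivAt).comp_hasFDerivAt y (P.hasFDerivAt_uf k y)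

lemma hasFDerivAt_s1' (hσ : ContDiff ℝ 2 P.σ) (k : Fin M) (y : Fin d → ℝ) :
    HasFDerivAt (fun y => P.σ' (P.uf k y))
      (P.σ'' (P.uf k y) • lc (fun i => P.W1 k i)) y :=
  ((P.sigma'_diff hσ _).hasDerivAt).comp_hasFDerivAt y (P.hasFDerivAt_uf k y)

def a2clm (j : Fin M) (y : Fin d → ℝ) : (Fin d → ℝ) →L[ℝ] ℝ :=
  ∑ k, P.W2 j k • (P.σ' (P.uf k y) • lc (fun i => P.W1 k i))

lemma hasFDerivAt_a2f (hσ : ContDiff ℝ 2 P.σ) (j : Fin M) (y : Fin d → ℝ) :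
    HasFDerivAt (P.a2f j) (P.a2clm j y) y := by
  unfold a2f a2clm
  exact (HasFDerivAt.fun_sum
    (fun k _ => (P.hasFDerivAt_s1 hσ k y).const_mul (P.W2 j k))).add_const (P.b2 j)

@[simp] lemma a2clm_single (i : Fin d) (j : Fin M) (y : Fin d → ℝ) :
    P.a2clm j y (Pi.single i 1) = P.D2f i j y := by
  simp [a2clm, D2f, ContinuousLinearMap.sum_apply, Pi.single_apply, mul_ite,
    Finset.sum_ite_eq']

def phiclm (y : Fin d → ℝ) : (Fin d → ℝ) →L[ℝ] ℝ :=
  ∑ j, P.W3 j • (P.σ' (P.a2f j y) • P.a2clm j y)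

lemma hasFDerivAt_sa2 (hσ : ContDiff ℝ 2 P.σ) (j : Fin M) (y : Fin d → ℝ) :
    HasFDerivAt (fun y => P.σ (P.a2f j y))
      (P.σ' (P.a2f j y) • P.a2clm j y) y :=
  ((P.sigma_diff hσ _).hasDerivAt).comp_hasFDerivAt y (P.hasFDerivAt_a2f hσ j y)

lemma hasFDerivAt_sa2' (hσ : ContDiff ℝ 2 P.σ) (j : Fin M) (y : Fin d → ℝ) :
    HasFDerivAt (fun y => P.σ' (P.a2f j y))
      (P.σ'' (P.a2f j y) • P.a2clm j y) y :=
  ((P.sigma'_diff hσ _).hasDerivAt).comp_hasFDerivAt y (P.hasFDerivAt_a2f hσ j y)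

lemma phi_eq (y : Fin d → ℝ) : P.phi y = (∑ j, P.W3 j * P.σ (P.a2f j y)) + P.b3 := rfl

lemma hasFDerivAt_phi (hσ : ContDiff ℝ 2 P.σ) (y : Fin d → ℝ) :
    HasFDerivAt P.phi (P.phiclm y) y := by
  have : HasFDerivAt (fun y => (∑ j, P.W3 j * P.σ (P.a2f j y)) + P.b3) (P.phiclm y) y := by
    unfold phiclm
    exact (HasFDerivAt.fun_sum
      (fun j _ => (P.hasFDerivAt_sa2 hσ j y).const_mul (P.W3 j))).add_const P.b3
  exact this

@[simp] lemma phiclm_single (i : Fin d) (y : Fin d → ℝ) :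
    P.phiclm y (Pi.single i 1) = P.phipf i y := by
  simp [phiclm, phipf, ContinuousLinearMap.sum_apply]

lemma pd_phi (hσ : ContDiff ℝ 2 P.σ) (i : Fin d) (y : Fin d → ℝ) :
    pd P.phi i y = P.phipf i y := by
  rw [pd, (P.hasFDerivAt_phi hσ y).fderiv, phiclm_single]

def D2clm (i : Fin d) (j : Fin M) (y : Fin d → ℝ) : (Fin d → ℝ) →L[ℝ] ℝ :=
  ∑ k, P.W2 j k • (P.W1 k i • (P.σ'' (P.uf k y) • lc (fun i' => P.W1 k i')))

lemma hasFDerivAt_D2f (hσ : ContDiff ℝ 2 P.σ) (i : Fin d) (j : Fin M) (y : Fin d → ℝ) :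
    HasFDerivAt (P.D2f i j) (P.D2clm i j y) y := by
  unfold D2f D2clm
  exact HasFDerivAt.fun_sum
    (fun k _ => ((P.hasFDerivAt_s1' hσ k y).mul_const (P.W1 k i)).const_mul (P.W2 j k))

@[simp] lemma D2clm_single (i : Fin d) (j : Fin M) (y : Fin d → ℝ) :
    P.D2clm i j y (Pi.single i 1) = P.Qf i j y := by
  simp only [D2clm, Qf, ContinuousLinearMap.sum_apply, ContinuousLinearMap.smul_apply,
    smul_eq_mul, lc_single]
  exact Finset.sum_congr rfl fun k _ => by ring

def phipclm (i : Fin d) (y : Fin d → ℝ) : (Fin d → ℝ) →L[ℝ] ℝ :=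
  ∑ j, P.W3 j • (P.σ' (P.a2f j y) • P.D2clm i j y
    + P.D2f i j y • (P.σ'' (P.a2f j y) • P.a2clm j y))

lemma hasFDerivAt_phipf (hσ : ContDiff ℝ 2 P.σ) (i : Fin d) (y : Fin d → ℝ) :
    HasFDerivAt (P.phipf i) (P.phipclm i y) y := by
  unfold phipf phipclm
  exact HasFDerivAt.fun_sum (fun j _ =>
    ((P.hasFDerivAt_sa2' hσ j y).mul (P.hasFDerivAt_D2f hσ i j y)).const_mul (P.W3 j))

@[simp] lemma phipclm_single (i : Fin d) (y : Fin d → ℝ) :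
    P.phipclm i y (Pi.single i 1) = P.phippf i y := by
  simp only [phipclm, phippf, ContinuousLinearMap.sum_apply, ContinuousLinearMap.add_apply,
    ContinuousLinearMap.smul_apply, smul_eq_mul, D2clm_single, a2clm_single]
  exact Finset.sum_congr rfl fun j _ => by ring

lemma pd_psiE (hσ : ContDiff ℝ 2 P.σ) (i : Fin d) (y : Fin d → ℝ) :
    pd P.psiE i y = 2 * y i * P.phi y + ((∑ i', y i' ^ 2) - 1) * P.phipf i y := by
  have h : HasFDerivAt P.psiE
      (((∑ i', y i' ^ 2) - 1) • P.phiclm y + P.phi y • nsqclm y) y :=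
    (hasFDerivAt_nsq y).mul (P.hasFDerivAt_phi hσ y)
  rw [pd, h.fderiv]
  simp
  try ring

lemma pd_inner (hσ : ContDiff ℝ 2 P.σ) (i : Fin d) (y : Fin d → ℝ) :
    pd (fun y => 2 * y i * P.phi y + ((∑ i', y i' ^ 2) - 1) * P.phipf i y) i y
      = 2 * P.phi y + 4 * y i * P.phipf i y + ((∑ i', y i' ^ 2) - 1) * P.phippf i y := by
  have hpr : HasFDerivAt (fun y : Fin d → ℝ => 2 * y i)
      ((2 : ℝ) • (ContinuousLinearMap.proj (R := ℝ) (φ := fun _ : Fin d => ℝ) i)) y :=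
    (ContinuousLinearMap.proj (R := ℝ) (φ := fun _ : Fin d => ℝ) i).hasFDerivAt.const_mul 2
  have h : HasFDerivAt
      (fun y => 2 * y i * P.phi y + ((∑ i', y i' ^ 2) - 1) * P.phipf i y)
      (((2 * y i) • P.phiclm y + P.phi y • ((2 : ℝ) •
          (ContinuousLinearMap.proj (R := ℝ) (φ := fun _ : Fin d => ℝ) i)))
        + (((∑ i', y i' ^ 2) - 1) • P.phipclm i y + P.phipf i y • nsqclm y)) y :=
    (hpr.mul (P.hasFDerivAt_phi hσ y)).add
      ((hasFDerivAt_nsq y).mul (P.hasFDerivAt_phipf hσ i y))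
  rw [pd, h.fderiv]
  simp [Pi.single_apply]
  try ring

lemma pd_term (hσ : ContDiff ℝ 2 P.σ) (hc : ContDiff ℝ 1 P.c) (i : Fin d) (n : Fin N) :
    pd (fun y => P.c y * pd P.psiE i y) i (P.x n)
      = P.dcX i n * (2 * P.X i n * P.phi (P.x n)
            + (P.Xhat n - 1) * P.phipf i (P.x n))
        + P.cX n * (2 * P.phi (P.x n) + 4 * P.X i n * P.phipf i (P.x n)
            + (P.Xhat n - 1) * P.phippf i (P.x n)) := by
  have hfun : (fun y => P.c y * pd P.psiE i y)
      = fun y => P.c y * (2 * y i * P.phi y + ((∑ i', y i' ^ 2) - 1) * P.phipf i y) := by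
    funext y; rw [pd_psiE P hσ]
  rw [hfun]
  set y := P.x n with hy
  have hpr : HasFDerivAt (fun y : Fin d → ℝ => 2 * y i)
      ((2 : ℝ) • (ContinuousLinearMap.proj (R := ℝ) (φ := fun _ : Fin d => ℝ) i)) y :=
    (ContinuousLinearMap.proj (R := ℝ) (φ := fun _ : Fin d => ℝ) i).hasFDerivAt.const_mul 2
  have hinner : HasFDerivAt
      (fun y => 2 * y i * P.phi y + ((∑ i', y i' ^ 2) - 1) * P.phipf i y)
      (((2 * y i) • P.phiclm y + P.phi y • ((2 : ℝ) •
          (ContinuousLinearMap.proj (R := ℝ) (φ := fun _ : Fin d => ℝ) i)))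
        + (((∑ i', y i' ^ 2) - 1) • P.phipclm i y + P.phipf i y • nsqclm y)) y :=
    (hpr.mul (P.hasFDerivAt_phi hσ y)).add
      ((hasFDerivAt_nsq y).mul (P.hasFDerivAt_phipf hσ i y))
  have hcd : HasFDerivAt P.c (fderiv ℝ P.c y) y :=
    ((hc.differentiable one_ne_zero) y).hasFDerivAt
  have h := hcd.fun_mul hinner
  rw [pd, h.fderiv]
  have hXhat : P.Xhat n = ∑ i', y i' ^ 2 := rfl
  have hXi : P.X i n = y i := rfl
  have hdc : P.dcX i n = fderiv ℝ P.c y (Pi.single i 1) := rfl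
  have hcx : P.cX n = P.c y := rfl
  rw [hXhat, hXi, hdc, hcx]
  simp [Pi.single_apply]
  try ring

lemma sRes_canon (hσ : ContDiff ℝ 2 P.σ) (hc : ContDiff ℝ 1 P.c) (n : Fin N) :
    P.sRes P.canonAux n = P.pinnRes n := by
  have hA2 : ∀ j, P.cA2 j n = P.a2f j (P.x n) := fun j => rfl
  have hD2 : ∀ i j, P.cD2 i j n = P.D2f i j (P.x n) := fun i j => rfl
  have hQ : ∀ i j, P.cQ i j n = P.Qf i j (P.x n) := fun i j => rfl
  have hphi : ((∑ j, P.W3 j * P.σ (P.canonAux.a2 j n)) + P.b3) = P.phi (P.x n) := rfl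
  have hphip : ∀ i, (∑ j, P.W3 j * (P.σ' (P.canonAux.a2 j n) * P.canonAux.d2 i j n))
      = P.phipf i (P.x n) := fun i => rfl
  have hphipp : ∀ i, (∑ j, P.W3 j * (P.σ'' (P.canonAux.a2 j n) * P.canonAux.d2 i j n
        * P.canonAux.d2 i j n + P.σ' (P.canonAux.a2 j n) * P.canonAux.q i j n))
      = P.phippf i (P.x n) := fun i => rfl
  unfold sRes pinnRes
  rw [hphi]
  simp only [hphip, hphipp]
  rw [Finset.sum_congr rfl (fun i (_ : i ∈ Finset.univ) => P.pd_term hσ hc i n)]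
  rw [sub_left_inj]
  simp only [Ke, Ki, Khat]
  exact alg_elliptic d (P.phi (P.x n)) (P.cX n) (P.Xhat n) (fun i => P.X i n)
    (fun i => P.dcX i n) (fun i => P.phipf i (P.x n)) (fun i => P.phippf i (P.x n))

@[simp] lemma Ra1_canon : P.Ra1 P.canonAux = fun _ _ => 0 := by
  funext j n; simp [Ra1, canonAux, cA1]

@[simp] lemma Ra2_canon : P.Ra2 P.canonAux = fun _ _ => 0 := by
  funext j n; simp [Ra2, canonAux, cA2]

@[simp] lemma Rd1_canon (i : Fin d) : P.Rd1 P.canonAux i = fun _ _ => 0 := by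
  funext j n; simp [Rd1, canonAux, cD1]

@[simp] lemma Rd2_canon (i : Fin d) : P.Rd2 P.canonAux i = fun _ _ => 0 := by
  funext j n; simp [Rd2, canonAux, cD2, cD1]

@[simp] lemma Rq_canon (i : Fin d) : P.Rq P.canonAux i = fun _ _ => 0 := by
  funext j n; simp [Rq, canonAux, cQ, cD1]

end EllData

@[simp] lemma colSq_zero {M N : ℕ} (n : Fin N) :
    colSq (fun _ _ => (0:ℝ) : Fin M → Fin N → ℝ) n = 0 := by simp [colSq]

@[simp] lemma wSq_zero {M N : ℕ} (Dsq : Fin N → ℝ) :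
    wSq Dsq (fun _ _ => (0:ℝ) : Fin M → Fin N → ℝ) = 0 := by simp [wSq]

@[simp] lemma froSq_zero {M N : ℕ} :
    froSq (fun _ _ => (0:ℝ) : Fin M → Fin N → ℝ) = 0 := by simp [froSq]

/-- **Theorem 2.2** (existence of auxiliary variables dominating the elliptic PINN loss).
For all network parameters `{W_l, b_l}`, there exist auxiliary variables
`a₁, a₂, {d_{1i}}, {d_{2i}}, {q_i}` such that `J^e_S ≤ J^e`. -/
theorem elliptic_lysep_aux_exists
    {d M N : ℕ} (hd : 0 < d) (hM : 0 < M) (hN : 0 < N)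
    (P : EllData d M N)
    (hσ : ContDiff ℝ 2 P.σ) (hc : ContDiff ℝ 1 P.c) :
    ∃ A : EllAux d M N, P.JeS A ≤ P.Je := by
  refine ⟨P.canonAux, le_of_eq ?_⟩
  have hJ : P.JeS P.canonAux
      = (1 / (N : ℝ)) * ∑ n, (P.sRes P.canonAux n) ^ 2 := by
    rw [EllData.JeS, P.Ra1_canon, P.Ra2_canon]
    simp [P.Rd1_canon, P.Rd2_canon, P.Rq_canon]
  rw [hJ, EllData.Je]
  congr 1
  exact Finset.sum_congr rfl fun n _ => by rw [P.sRes_canon hσ hc n]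
end
end

section
/- Columnwise bound on the first-derivative output mismatch (inequality (A.6)). Suppose |σ(z₁)−σ(z₂)| ≤ C_σ|z₁−z₂|, |σ'(z)| ≤ B_{σ'}, and |σ'(z₁)−σ'(z₂)| ≤ C_{σ'}|z₁−z₂| for all z,z₁,z₂ ∈ ℝ. Define, for i ∈ {1,…,d} and n ∈ {1,…,N}, z_n = W₂σ(W₁x_n+b₁)+b₂, s_{n,i} = W₂(σ'(W₁x_n+b₁)*W₁(:,i)), and T_{2i}[n] = σ'(z_n)*s_{n,i} − σ'(a₂[n])*d_{2i}[n]. Then ‖T_{2i}[n]‖₂ ≤ C₁( ‖W₂‖_F‖W₁(:,i)−d_{1i}[n]‖₂ + ‖W₂(σ'(a₁[n])*d_{1i}[n])−d_{2i}[n]‖₂ + ‖W₂‖_F(‖d_{1i}[n]‖₂+‖d_{2i}[n]‖₂)‖W₁x_n+b₁−a₁[n]‖₂ + ‖d_{2i}[n]‖₂‖W₂σ(a₁[n])+b₂−a₂[n]‖₂ ), where C₁ = max{B_{σ'}·max{1,B_{σ'}}, C_{σ'}·max{1,B_{σ'},C_σ}}. -/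
open scoped BigOperators

noncomputable section

/-- Euclidean norm of a vector in `ℝ^M`. -/
def vecEnorm {M : ℕ} (v : Fin M → ℝ) : ℝ := Real.sqrt (∑ j, (v j) ^ 2)

/-- Frobenius norm of an `M × M` matrix. -/
def froW {M : ℕ} (W : Fin M → Fin M → ℝ) : ℝ := Real.sqrt (∑ j, ∑ k, (W j k) ^ 2)

/-- `z_n = W₂σ(W₁x_n+b₁)+b₂` -/
def Zn {d M : ℕ} (σ : ℝ → ℝ) (W1 : Fin M → Fin d → ℝ) (b1 : Fin M → ℝ)
    (W2 : Fin M → Fin M → ℝ) (b2 : Fin M → ℝ) (xn : Fin d → ℝ) : Fin M → ℝ :=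
  fun j => (∑ k, W2 j k * σ ((∑ i', W1 k i' * xn i') + b1 k)) + b2 j

/-- `s_{n,i} = W₂(σ'(W₁x_n+b₁)*W₁(:,i))` -/
def Sni {d M : ℕ} (σ : ℝ → ℝ) (W1 : Fin M → Fin d → ℝ) (b1 : Fin M → ℝ)
    (W2 : Fin M → Fin M → ℝ) (xn : Fin d → ℝ) (i : Fin d) : Fin M → ℝ :=
  fun j => ∑ k, W2 j k * (deriv σ ((∑ i', W1 k i' * xn i') + b1 k) * W1 k i)

/-- `T_{2i}[n] = σ'(z_n)*s_{n,i} − σ'(a₂[n])*d_{2i}[n]` -/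
def T2col {d M N : ℕ} (σ : ℝ → ℝ) (W1 : Fin M → Fin d → ℝ) (b1 : Fin M → ℝ)
    (W2 : Fin M → Fin M → ℝ) (b2 : Fin M → ℝ) (xn : Fin d → ℝ)
    (a2 : Fin M → Fin N → ℝ) (d2 : Fin d → Fin M → Fin N → ℝ)
    (i : Fin d) (n : Fin N) : Fin M → ℝ :=
  fun j => deriv σ (Zn σ W1 b1 W2 b2 xn j) * Sni σ W1 b1 W2 xn i j
    - deriv σ (a2 j n) * d2 i j n

lemma vecEnorm_nonneg {M : ℕ} (v : Fin M → ℝ) : 0 ≤ vecEnorm v := Real.sqrt_nonneg _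
lemma froW_nonneg {M : ℕ} (W : Fin M → Fin M → ℝ) : 0 ≤ froW W := Real.sqrt_nonneg _

lemma vecEnorm_mono {M : ℕ} {v w : Fin M → ℝ} (h : ∀ j, |v j| ≤ |w j|) :
    vecEnorm v ≤ vecEnorm w := by
  apply Real.sqrt_le_sqrt
  apply Finset.sum_le_sum
  intro j _
  rw [← sq_abs (v j), ← sq_abs (w j)]
  exact pow_le_pow_left₀ (abs_nonneg _) (h j) 2

lemma vecEnorm_eq {M : ℕ} (v : Fin M → ℝ) :
    vecEnorm v = ‖(WithLp.equiv 2 (Fin M → ℝ)).symm v‖ := by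
  rw [EuclideanSpace.norm_eq]
  unfold vecEnorm
  congr 1
  apply Finset.sum_congr rfl
  intro j _
  simp [sq_abs]

lemma vecEnorm_add_le {M : ℕ} (v w : Fin M → ℝ) :
    vecEnorm (fun j => v j + w j) ≤ vecEnorm v + vecEnorm w := by
  rw [vecEnorm_eq, vecEnorm_eq, vecEnorm_eq]
  exact norm_add_le ((WithLp.equiv 2 (Fin M → ℝ)).symm v) ((WithLp.equiv 2 (Fin M → ℝ)).symm w)

lemma vecEnorm_smul {M : ℕ} (C : ℝ) (hC : 0 ≤ C) (v : Fin M → ℝ) :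
    vecEnorm (fun j => C * v j) = C * vecEnorm v := by
  unfold vecEnorm
  have h : (∑ j, (C * v j) ^ 2) = C ^ 2 * ∑ j, (v j) ^ 2 := by
    rw [Finset.mul_sum]
    exact Finset.sum_congr rfl fun j _ => by ring
  rw [h, Real.sqrt_mul (sq_nonneg C), Real.sqrt_sq hC]

lemma vecEnorm_mul_left_le {M : ℕ} {c : Fin M → ℝ} {C : ℝ} (hC0 : 0 ≤ C)
    (hC : ∀ j, |c j| ≤ C) (v : Fin M → ℝ) :
    vecEnorm (fun j => c j * v j) ≤ C * vecEnorm v := by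
  rw [← vecEnorm_smul C hC0 v]
  apply vecEnorm_mono
  intro j
  rw [abs_mul, abs_mul, abs_of_nonneg hC0]
  exact mul_le_mul_of_nonneg_right (hC j) (abs_nonneg _)

lemma vecEnorm_mul_le {M : ℕ} (v w : Fin M → ℝ) :
    vecEnorm (fun j => v j * w j) ≤ vecEnorm v * vecEnorm w := by
  unfold vecEnorm
  rw [← Real.sqrt_mul (Finset.sum_nonneg fun j _ => sq_nonneg _)]
  apply Real.sqrt_le_sqrt
  rw [Finset.sum_mul]
  apply Finset.sum_le_sum
  intro j _
  rw [mul_pow]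
  exact mul_le_mul_of_nonneg_left
    (Finset.single_le_sum (fun k _ => sq_nonneg (w k)) (Finset.mem_univ j)) (sq_nonneg _)

lemma vecEnorm_matvec_le {M : ℕ} (W : Fin M → Fin M → ℝ) (v : Fin M → ℝ) :
    vecEnorm (fun j => ∑ k, W j k * v k) ≤ froW W * vecEnorm v := by
  unfold vecEnorm froW
  rw [← Real.sqrt_mul (Finset.sum_nonneg fun j _ => Finset.sum_nonneg fun k _ => sq_nonneg _)]
  apply Real.sqrt_le_sqrt
  rw [Finset.sum_mul]
  apply Finset.sum_le_sum
  intro j _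
  exact Finset.sum_mul_sq_le_sq_mul_sq Finset.univ (W j) v

set_option maxHeartbeats 1000000 in
lemma master {M : ℕ} (σ : ℝ → ℝ) (Cσ Cσ' Bσ' : ℝ)
    (hLσ : ∀ z₁ z₂ : ℝ, |σ z₁ - σ z₂| ≤ Cσ * |z₁ - z₂|)
    (hbσ' : ∀ z : ℝ, |deriv σ z| ≤ Bσ')
    (hLσ' : ∀ z₁ z₂ : ℝ, |deriv σ z₁ - deriv σ z₂| ≤ Cσ' * |z₁ - z₂|)
    (W2 : Fin M → Fin M → ℝ) (b2 : Fin M → ℝ)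
    (u a1 a2 d1 d2 w1 : Fin M → ℝ) :
    vecEnorm (fun j => deriv σ ((∑ k, W2 j k * σ (u k)) + b2 j)
        * (∑ k, W2 j k * (deriv σ (u k) * w1 k)) - deriv σ (a2 j) * d2 j)
      ≤ constC1 Cσ Cσ' Bσ' *
          (froW W2 * vecEnorm (fun k => w1 k - d1 k)
            + vecEnorm (fun j => (∑ k, W2 j k * (deriv σ (a1 k) * d1 k)) - d2 j)
            + froW W2 * (vecEnorm d1 + vecEnorm d2) * vecEnorm (fun k => u k - a1 k)
            + vecEnorm d2 * vecEnorm (fun j => (∑ k, W2 j k * σ (a1 k)) + b2 j - a2 j)) := by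
  have hB0 : 0 ≤ Bσ' := le_trans (abs_nonneg _) (hbσ' 0)
  have hCσ0 : 0 ≤ Cσ := by
    have h := hLσ 1 0
    rw [show (1:ℝ) - 0 = 1 by ring, abs_one, mul_one] at h
    exact le_trans (abs_nonneg _) h
  have hCσ'0 : 0 ≤ Cσ' := by
    have h := hLσ' 1 0
    rw [show (1:ℝ) - 0 = 1 by ring, abs_one, mul_one] at h
    exact le_trans (abs_nonneg _) h
  set C1 := constC1 Cσ Cσ' Bσ' with hC1def
  have hmax1 : Bσ' * max 1 Bσ' ≤ C1 := le_max_left _ _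
  have hmax2 : Cσ' * max (max 1 Bσ') Cσ ≤ C1 := le_max_right _ _
  have c1 : Bσ' * Bσ' ≤ C1 :=
    le_trans (mul_le_mul_of_nonneg_left (le_max_right 1 Bσ') hB0) hmax1
  have c2 : Bσ' ≤ C1 :=
    le_trans (le_mul_of_one_le_right hB0 (le_max_left 1 Bσ')) hmax1
  have c3 : Bσ' * Cσ' ≤ C1 := by
    have : Cσ' * Bσ' ≤ Cσ' * max (max 1 Bσ') Cσ :=
      mul_le_mul_of_nonneg_left (le_trans (le_max_right 1 Bσ') (le_max_left _ Cσ)) hCσ'0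
    linarith
  have c4 : Cσ' * Cσ ≤ C1 :=
    le_trans (mul_le_mul_of_nonneg_left (le_max_right _ Cσ) hCσ'0) hmax2
  have c5 : Cσ' ≤ C1 :=
    le_trans (le_mul_of_one_le_right hCσ'0
      (le_trans (le_max_left 1 Bσ') (le_max_left _ Cσ))) hmax2
  -- vectors
  set P1 : Fin M → ℝ := fun j => deriv σ ((∑ k, W2 j k * σ (u k)) + b2 j)
      * (∑ k, W2 j k * (deriv σ (u k) * (w1 k - d1 k))) with hP1
  set P2 : Fin M → ℝ := fun j => deriv σ ((∑ k, W2 j k * σ (u k)) + b2 j)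
      * (∑ k, W2 j k * ((deriv σ (u k) - deriv σ (a1 k)) * d1 k)) with hP2
  set P3 : Fin M → ℝ := fun j => deriv σ ((∑ k, W2 j k * σ (u k)) + b2 j)
      * ((∑ k, W2 j k * (deriv σ (a1 k) * d1 k)) - d2 j) with hP3
  set P4 : Fin M → ℝ := fun j => (deriv σ ((∑ k, W2 j k * σ (u k)) + b2 j)
      - deriv σ (a2 j)) * d2 j with hP4
  set q : Fin M → ℝ := fun j => ∑ k, W2 j k * (σ (u k) - σ (a1 k)) with hq
  -- scalar names
  set WF := froW W2 with hWF
  set nA := vecEnorm (fun k => w1 k - d1 k) with hnA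
  set nB := vecEnorm (fun j => (∑ k, W2 j k * (deriv σ (a1 k) * d1 k)) - d2 j) with hnB
  set nU := vecEnorm (fun k => u k - a1 k) with hnU
  set nD1 := vecEnorm d1 with hnD1
  set nD2 := vecEnorm d2 with hnD2
  set nE := vecEnorm (fun j => (∑ k, W2 j k * σ (a1 k)) + b2 j - a2 j) with hnE
  have hWF0 : 0 ≤ WF := froW_nonneg _
  have hnA0 : 0 ≤ nA := vecEnorm_nonneg _
  have hnB0 : 0 ≤ nB := vecEnorm_nonneg _
  have hnU0 : 0 ≤ nU := vecEnorm_nonneg _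
  have hnD10 : 0 ≤ nD1 := vecEnorm_nonneg _
  have hnD20 : 0 ≤ nD2 := vecEnorm_nonneg _
  have hnE0 : 0 ≤ nE := vecEnorm_nonneg _
  -- decomposition
  have hTeq : (fun j => deriv σ ((∑ k, W2 j k * σ (u k)) + b2 j)
        * (∑ k, W2 j k * (deriv σ (u k) * w1 k)) - deriv σ (a2 j) * d2 j)
      = fun j => P1 j + (P2 j + (P3 j + P4 j)) := by
    funext j
    have hsum : (∑ k, W2 j k * (deriv σ (u k) * w1 k))
        = (∑ k, W2 j k * (deriv σ (u k) * (w1 k - d1 k)))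
          + ((∑ k, W2 j k * ((deriv σ (u k) - deriv σ (a1 k)) * d1 k))
            + (∑ k, W2 j k * (deriv σ (a1 k) * d1 k))) := by
      rw [← Finset.sum_add_distrib, ← Finset.sum_add_distrib]
      exact Finset.sum_congr rfl fun k _ => by ring
    simp only [hP1, hP2, hP3, hP4]
    rw [hsum]
    ring
  rw [hTeq]
  -- triangle inequality
  have tri : vecEnorm (fun j => P1 j + (P2 j + (P3 j + P4 j)))
      ≤ vecEnorm P1 + (vecEnorm P2 + (vecEnorm P3 + vecEnorm P4)) :=
    le_trans (vecEnorm_add_le P1 _)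
      (add_le_add_right (le_trans (vecEnorm_add_le P2 _)
        (add_le_add_right (vecEnorm_add_le P3 P4) _)) _)
  -- bound P1
  have b1 : vecEnorm P1 ≤ Bσ' * (WF * (Bσ' * nA)) := by
    rw [hP1]
    have s1 : vecEnorm (fun k => deriv σ (u k) * (w1 k - d1 k)) ≤ Bσ' * nA := by
      rw [hnA]
      exact vecEnorm_mul_left_le hB0 (fun k => hbσ' _) _
    have s2 : vecEnorm (fun j => ∑ k, W2 j k * (deriv σ (u k) * (w1 k - d1 k)))
        ≤ WF * (Bσ' * nA) :=
      le_trans (vecEnorm_matvec_le _ _) (mul_le_mul_of_nonneg_left s1 hWF0)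
    exact le_trans (vecEnorm_mul_left_le hB0 (fun j => hbσ' _) _)
      (mul_le_mul_of_nonneg_left s2 hB0)
  -- bound P2
  have b2' : vecEnorm P2 ≤ Bσ' * (WF * (Cσ' * (nU * nD1))) := by
    rw [hP2]
    have s0 : vecEnorm (fun k => (deriv σ (u k) - deriv σ (a1 k)) * d1 k)
        ≤ Cσ' * (nU * nD1) := by
      have step1 : vecEnorm (fun k => (deriv σ (u k) - deriv σ (a1 k)) * d1 k)
          ≤ vecEnorm (fun k => Cσ' * ((u k - a1 k) * d1 k)) := by
        apply vecEnorm_mono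
        intro k
        rw [abs_mul]
        calc |deriv σ (u k) - deriv σ (a1 k)| * |d1 k|
            ≤ (Cσ' * |u k - a1 k|) * |d1 k| :=
              mul_le_mul_of_nonneg_right (hLσ' _ _) (abs_nonneg _)
          _ = |Cσ' * ((u k - a1 k) * d1 k)| := by
              rw [abs_mul, abs_mul, abs_of_nonneg hCσ'0]; ring
      rw [vecEnorm_smul Cσ' hCσ'0] at step1
      refine le_trans step1 (mul_le_mul_of_nonneg_left ?_ hCσ'0)
      rw [hnU, hnD1]
      exact vecEnorm_mul_le _ _
    have s2 : vecEnorm (fun j => ∑ k, W2 j k * ((deriv σ (u k) - deriv σ (a1 k)) * d1 k))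
        ≤ WF * (Cσ' * (nU * nD1)) :=
      le_trans (vecEnorm_matvec_le _ _) (mul_le_mul_of_nonneg_left s0 hWF0)
    exact le_trans (vecEnorm_mul_left_le hB0 (fun j => hbσ' _) _)
      (mul_le_mul_of_nonneg_left s2 hB0)
  -- bound P3
  have b3 : vecEnorm P3 ≤ Bσ' * nB := by
    rw [hP3, hnB]
    exact vecEnorm_mul_left_le hB0 (fun j => hbσ' _) _
  -- bound P4
  have b4 : vecEnorm P4 ≤ Cσ' * (WF * (Cσ * nU) * nD2 + nE * nD2) := by
    have hze : ∀ j, ((∑ k, W2 j k * σ (u k)) + b2 j) - a2 j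
        = q j + ((∑ k, W2 j k * σ (a1 k)) + b2 j - a2 j) := by
      intro j
      have h : (∑ k, W2 j k * (σ (u k) - σ (a1 k)))
          = (∑ k, W2 j k * σ (u k)) - ∑ k, W2 j k * σ (a1 k) := by
        rw [← Finset.sum_sub_distrib]
        exact Finset.sum_congr rfl fun k _ => by ring
      rw [hq]
      simp only []
      rw [h]
      ring
    have step1 : vecEnorm P4 ≤ vecEnorm (fun j =>
        Cσ' * ((|q j| + |(∑ k, W2 j k * σ (a1 k)) + b2 j - a2 j|) * |d2 j|)) := by
      apply vecEnorm_mono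
      intro j
      rw [hP4]
      simp only []
      rw [abs_mul]
      calc |deriv σ ((∑ k, W2 j k * σ (u k)) + b2 j) - deriv σ (a2 j)| * |d2 j|
          ≤ (Cσ' * |((∑ k, W2 j k * σ (u k)) + b2 j) - a2 j|) * |d2 j| :=
            mul_le_mul_of_nonneg_right (hLσ' _ _) (abs_nonneg _)
        _ ≤ (Cσ' * (|q j| + |(∑ k, W2 j k * σ (a1 k)) + b2 j - a2 j|)) * |d2 j| := by
            refine mul_le_mul_of_nonneg_right
              (mul_le_mul_of_nonneg_left ?_ hCσ'0) (abs_nonneg _)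
            rw [hze j]
            exact abs_add_le _ _
        _ = |Cσ' * ((|q j| + |(∑ k, W2 j k * σ (a1 k)) + b2 j - a2 j|) * |d2 j|)| := by
            rw [abs_of_nonneg (mul_nonneg hCσ'0 (mul_nonneg
              (add_nonneg (abs_nonneg _) (abs_nonneg _)) (abs_nonneg _)))]
            ring
    rw [vecEnorm_smul Cσ' hCσ'0] at step1
    refine le_trans step1 (mul_le_mul_of_nonneg_left ?_ hCσ'0)
    -- vecEnorm ((|q| + |e|) * |d2|) ≤ WF * (Cσ * nU) * nD2 + nE * nD2
    have hsplit : (fun j => (|q j| + |(∑ k, W2 j k * σ (a1 k)) + b2 j - a2 j|) * |d2 j|)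
        = fun j => |q j| * |d2 j| + |(∑ k, W2 j k * σ (a1 k)) + b2 j - a2 j| * |d2 j| := by
      funext j; ring
    rw [hsplit]
    refine le_trans (vecEnorm_add_le _ _) (add_le_add ?_ ?_)
    · -- vecEnorm (|q| * |d2|) ≤ WF * (Cσ * nU) * nD2
      have t1 : vecEnorm (fun j => |q j| * |d2 j|) ≤ vecEnorm q * nD2 := by
        refine le_trans (vecEnorm_mono (w := fun j => q j * d2 j) (fun j => ?_)) ?_
        · rw [abs_mul, abs_abs, abs_abs, abs_mul]
        · rw [hnD2]; exact vecEnorm_mul_le _ _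
      have t2 : vecEnorm q ≤ WF * (Cσ * nU) := by
        rw [hq]
        refine le_trans (vecEnorm_matvec_le _ _) (mul_le_mul_of_nonneg_left ?_ hWF0)
        have step : vecEnorm (fun k => σ (u k) - σ (a1 k))
            ≤ vecEnorm (fun k => Cσ * (u k - a1 k)) := by
          apply vecEnorm_mono
          intro k
          rw [abs_mul, abs_of_nonneg hCσ0]
          exact hLσ _ _
        rw [vecEnorm_smul Cσ hCσ0] at step
        rw [hnU]
        exact step
      calc vecEnorm (fun j => |q j| * |d2 j|) ≤ vecEnorm q * nD2 := t1
        _ ≤ WF * (Cσ * nU) * nD2 := mul_le_mul_of_nonneg_right t2 hnD20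
    · -- vecEnorm (|e| * |d2|) ≤ nE * nD2
      refine le_trans (vecEnorm_mono
          (w := fun j => ((∑ k, W2 j k * σ (a1 k)) + b2 j - a2 j) * d2 j) (fun j => ?_)) ?_
      · rw [abs_mul, abs_abs, abs_abs, abs_mul]
      · rw [hnE, hnD2]; exact vecEnorm_mul_le _ _
  -- assemble
  have t1 : Bσ' * (WF * (Bσ' * nA)) ≤ C1 * (WF * nA) := by
    calc Bσ' * (WF * (Bσ' * nA)) = (Bσ' * Bσ') * (WF * nA) := by ring
      _ ≤ C1 * (WF * nA) := mul_le_mul_of_nonneg_right c1 (mul_nonneg hWF0 hnA0)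
  have t2 : Bσ' * (WF * (Cσ' * (nU * nD1))) ≤ C1 * (WF * nU * nD1) := by
    calc Bσ' * (WF * (Cσ' * (nU * nD1))) = (Bσ' * Cσ') * (WF * nU * nD1) := by ring
      _ ≤ C1 * (WF * nU * nD1) :=
        mul_le_mul_of_nonneg_right c3 (mul_nonneg (mul_nonneg hWF0 hnU0) hnD10)
  have t3 : Bσ' * nB ≤ C1 * nB := mul_le_mul_of_nonneg_right c2 hnB0
  have t4 : Cσ' * (WF * (Cσ * nU) * nD2 + nE * nD2)
      ≤ C1 * (WF * nU * nD2) + C1 * (nE * nD2) := by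
    have u1 : Cσ' * (WF * (Cσ * nU) * nD2) ≤ C1 * (WF * nU * nD2) := by
      calc Cσ' * (WF * (Cσ * nU) * nD2) = (Cσ' * Cσ) * (WF * nU * nD2) := by ring
        _ ≤ C1 * (WF * nU * nD2) :=
          mul_le_mul_of_nonneg_right c4 (mul_nonneg (mul_nonneg hWF0 hnU0) hnD20)
    have u2 : Cσ' * (nE * nD2) ≤ C1 * (nE * nD2) :=
      mul_le_mul_of_nonneg_right c5 (mul_nonneg hnE0 hnD20)
    nlinarith [u1, u2]
  have final : C1 * (WF * nA) + C1 * (WF * nU * nD1) + C1 * nB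
      + (C1 * (WF * nU * nD2) + C1 * (nE * nD2))
      = C1 * (WF * nA + nB + WF * (nD1 + nD2) * nU + nD2 * nE) := by ring
  linarith [tri, b1, b2', b3, b4, t1, t2, t3, t4]

/-- **Inequality (A.6)** (columnwise bound on the first-derivative output mismatch). -/
theorem first_derivative_output_mismatch_columnwise_bound
    {d M N : ℕ} (hd : 0 < d) (hM : 0 < M) (hN : 0 < N)
    (σ : ℝ → ℝ) (Cσ Cσ' Bσ' : ℝ)
    (hLσ : ∀ z₁ z₂ : ℝ, |σ z₁ - σ z₂| ≤ Cσ * |z₁ - z₂|)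
    (hbσ' : ∀ z : ℝ, |deriv σ z| ≤ Bσ')
    (hLσ' : ∀ z₁ z₂ : ℝ, |deriv σ z₁ - deriv σ z₂| ≤ Cσ' * |z₁ - z₂|)
    (W1 : Fin M → Fin d → ℝ) (b1 : Fin M → ℝ)
    (W2 : Fin M → Fin M → ℝ) (b2 : Fin M → ℝ)
    (xn : Fin d → ℝ)
    (a1 a2 : Fin M → Fin N → ℝ)
    (d1 d2 : Fin d → Fin M → Fin N → ℝ)
    (i : Fin d) (n : Fin N) :
    vecEnorm (T2col σ W1 b1 W2 b2 xn a2 d2 i n)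
      ≤ constC1 Cσ Cσ' Bσ' *
          (froW W2 * vecEnorm (fun k => W1 k i - d1 i k n)
            + vecEnorm (fun j => (∑ k, W2 j k * (deriv σ (a1 k n) * d1 i k n)) - d2 i j n)
            + froW W2 * (vecEnorm (fun k => d1 i k n) + vecEnorm (fun k => d2 i k n)) *
                vecEnorm (fun k => (∑ i', W1 k i' * xn i') + b1 k - a1 k n)
            + vecEnorm (fun k => d2 i k n) *
                vecEnorm (fun j => (∑ k, W2 j k * σ (a1 k n)) + b2 j - a2 j n)) := by
  exact master σ Cσ Cσ' Bσ' hLσ hbσ' hLσ' W2 b2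
    (fun k => (∑ i', W1 k i' * xn i') + b1 k)
    (fun k => a1 k n) (fun k => a2 k n)
    (fun k => d1 i k n) (fun k => d2 i k n) (fun k => W1 k i)
end
end

section
/- Summed squared bound on the first-derivative output mismatch (inequality (A.7)). Under the hypotheses and notation of inequality (A.6), with T_{2i} ∈ ℝ^{M×N} the matrix whose n-th column is T_{2i}[n] = σ'(z_n)*s_{n,i} − σ'(a₂[n])*d_{2i}[n], one has for each i ∈ {1,…,d}: ‖T_{2i}‖_F² ≤ 5C₁² Σ_{n=1}^N [ ‖W₂‖_F²‖W₁(:,i)−d_{1i}[n]‖₂² + ‖W₂(σ'(a₁[n])*d_{1i}[n])−d_{2i}[n]‖₂² + ‖W₂‖_F²(‖d_{1i}[n]‖₂²+‖d_{2i}[n]‖₂²)‖W₁x_n+b₁−a₁[n]‖₂² + ‖d_{2i}[n]‖₂²‖W₂σ(a₁[n])+b₂−a₂[n]‖₂² ], where C₁ = max{B_{σ'}·max{1,B_{σ'}}, C_{σ'}·max{1,B_{σ'},C_σ}}. -/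
open scoped BigOperators

noncomputable section

/-- Euclidean norm of a vector in `ℝ^M`. -/
def enorm {M : ℕ} (v : Fin M → ℝ) : ℝ := Real.sqrt (∑ j, (v j) ^ 2)

/-- Squared Euclidean norm. -/
def esq {M : ℕ} (v : Fin M → ℝ) : ℝ := ∑ j, (v j) ^ 2

private lemma aux_sum_mul_le {α : Type*} (s : Finset α) (f g : α → ℝ)
    (hf : ∀ k ∈ s, 0 ≤ f k) (hg : ∀ k ∈ s, 0 ≤ g k) :
    ∑ k ∈ s, f k * g k ≤ (∑ k ∈ s, f k) * (∑ k ∈ s, g k) := by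
  calc ∑ k ∈ s, f k * g k ≤ ∑ k ∈ s, f k * (∑ l ∈ s, g l) :=
        Finset.sum_le_sum fun k hk =>
          mul_le_mul_of_nonneg_left (Finset.single_le_sum hg hk) (hf k hk)
    _ = _ := by rw [← Finset.sum_mul]

private lemma aux_five (a b c d e t : ℝ) (ha : 0 ≤ a) (hb : 0 ≤ b) (hc : 0 ≤ c)
    (hd : 0 ≤ d) (he : 0 ≤ e) (ht : |t| ≤ a + b + c + d + e) :
    t ^ 2 ≤ 5 * (a ^ 2 + b ^ 2 + c ^ 2 + d ^ 2 + e ^ 2) := by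
  have h1 : t ^ 2 ≤ (a + b + c + d + e) ^ 2 := by
    nlinarith [abs_nonneg t, sq_abs t]
  nlinarith [sq_nonneg (a-b), sq_nonneg (a-c), sq_nonneg (a-d), sq_nonneg (a-e),
    sq_nonneg (b-c), sq_nonneg (b-d), sq_nonneg (b-e), sq_nonneg (c-d), sq_nonneg (c-e),
    sq_nonneg (d-e)]

private lemma lip_sq {x C y : ℝ} (h : |x| ≤ C * |y|) : x ^ 2 ≤ C ^ 2 * y ^ 2 := by
  have h2 : |x| ^ 2 ≤ (C * |y|) ^ 2 := pow_le_pow_left₀ (abs_nonneg x) h 2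
  rw [sq_abs] at h2
  rw [mul_pow, sq_abs] at h2
  exact h2

set_option maxHeartbeats 1000000 in
private lemma A7_entry {M : ℕ} (σ : ℝ → ℝ) (Cσ Cσ' Bσ' : ℝ)
    (hLσ : ∀ z₁ z₂ : ℝ, |σ z₁ - σ z₂| ≤ Cσ * |z₁ - z₂|)
    (hbσ' : ∀ z : ℝ, |deriv σ z| ≤ Bσ')
    (hLσ' : ∀ z₁ z₂ : ℝ, |deriv σ z₁ - deriv σ z₂| ≤ Cσ' * |z₁ - z₂|)
    (w2 : Fin M → ℝ) (b2j a2j d2j : ℝ) (p w a1c d1c : Fin M → ℝ) :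
    (deriv σ ((∑ k, w2 k * σ (p k)) + b2j) * (∑ k, w2 k * (deriv σ (p k) * w k))
        - deriv σ a2j * d2j) ^ 2
      ≤ 5 * constC1 Cσ Cσ' Bσ' ^ 2 *
          ((∑ k, (w2 k) ^ 2) * (∑ k, (w k - d1c k) ^ 2)
            + ((∑ k, w2 k * (deriv σ (a1c k) * d1c k)) - d2j) ^ 2
            + (∑ k, (w2 k) ^ 2) * ((∑ k, (p k - a1c k) ^ 2) * (∑ k, (d1c k) ^ 2))
            + ((∑ k, (w2 k) ^ 2) * d2j ^ 2) * (∑ k, (p k - a1c k) ^ 2)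
            + ((∑ k, w2 k * σ (a1c k)) + b2j - a2j) ^ 2 * d2j ^ 2) := by
  have hB : 0 ≤ Bσ' := (abs_nonneg _).trans (hbσ' 0)
  have hCs : 0 ≤ Cσ := by
    have h := hLσ 1 0
    rw [sub_zero, abs_one, mul_one] at h
    exact (abs_nonneg _).trans h
  have hCs' : 0 ≤ Cσ' := by
    have h := hLσ' 1 0
    rw [sub_zero, abs_one, mul_one] at h
    exact (abs_nonneg _).trans h
  set C1 := constC1 Cσ Cσ' Bσ' with hC1
  have hL : Bσ' * max 1 Bσ' ≤ C1 := le_max_left _ _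
  have hR : Cσ' * max (max 1 Bσ') Cσ ≤ C1 := le_max_right _ _
  have hm1 : (1:ℝ) ≤ max 1 Bσ' := le_max_left 1 Bσ'
  have hm2 : Bσ' ≤ max 1 Bσ' := le_max_right 1 Bσ'
  have hm3 : max 1 Bσ' ≤ max (max 1 Bσ') Cσ := le_max_left _ _
  have hm4 : Cσ ≤ max (max 1 Bσ') Cσ := le_max_right _ _
  have hc1 : Bσ' ≤ C1 := by nlinarith
  have hc2 : Bσ' ^ 2 ≤ C1 := by nlinarith
  have hc3 : Cσ' ≤ C1 := by nlinarith
  have hc4 : Cσ' * Bσ' ≤ C1 := by nlinarith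
  have hc5 : Cσ' * Cσ ≤ C1 := by nlinarith
  have hC1nn : 0 ≤ C1 := hB.trans hc1
  have hq2 : Bσ' ^ 4 ≤ C1 ^ 2 := by nlinarith [sq_nonneg Bσ']
  have hq3 : Bσ' ^ 2 * Cσ' ^ 2 ≤ C1 ^ 2 := by nlinarith [mul_nonneg hCs' hB]
  have hq4 : Bσ' ^ 2 ≤ C1 ^ 2 := by nlinarith
  have hq5 : Cσ' ^ 2 * Cσ ^ 2 ≤ C1 ^ 2 := by nlinarith [mul_nonneg hCs' hCs]
  have hq6 : Cσ' ^ 2 ≤ C1 ^ 2 := by nlinarith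
  set zz := (∑ k, w2 k * σ (p k)) + b2j with hzz
  set sv := ∑ k, w2 k * (deriv σ (p k) * w k) with hsv
  set Uv := ∑ k, w2 k * (deriv σ (a1c k) * d1c k) with hUv
  set g1 := ∑ k, w2 k * (deriv σ (p k) * (w k - d1c k)) with hg1
  set g2 := ∑ k, w2 k * ((deriv σ (p k) - deriv σ (a1c k)) * d1c k) with hg2
  set ev := ∑ k, w2 k * (σ (p k) - σ (a1c k)) with hev
  set fv := (∑ k, w2 k * σ (a1c k)) + b2j - a2j with hfv
  set Rq := ∑ k, (w2 k) ^ 2 with hRq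
  set A := ∑ k, (w k - d1c k) ^ 2 with hA
  set E := ∑ k, (p k - a1c k) ^ 2 with hE
  set D1 := ∑ k, (d1c k) ^ 2 with hD1
  have hRq0 : 0 ≤ Rq := Finset.sum_nonneg fun _ _ => sq_nonneg _
  have hA0 : 0 ≤ A := Finset.sum_nonneg fun _ _ => sq_nonneg _
  have hE0 : 0 ≤ E := Finset.sum_nonneg fun _ _ => sq_nonneg _
  have hD10 : 0 ≤ D1 := Finset.sum_nonneg fun _ _ => sq_nonneg _
  -- decomposition
  have hsplit : sv = g1 + g2 + Uv := by
    rw [hsv, hg1, hg2, hUv, ← Finset.sum_add_distrib, ← Finset.sum_add_distrib]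
    exact Finset.sum_congr rfl fun k _ => by ring
  have hza : zz - a2j = ev + fv := by
    rw [hzz, hev, hfv]
    simp only [mul_sub, Finset.sum_sub_distrib]
    ring
  have hdecomp : deriv σ zz * sv - deriv σ a2j * d2j
      = deriv σ zz * g1 + deriv σ zz * g2 + deriv σ zz * (Uv - d2j)
        + (deriv σ zz - deriv σ a2j) * d2j := by
    rw [hsplit]; ring
  -- abs bounds
  have h1 : |deriv σ zz * g1| ≤ Bσ' * |g1| := by
    rw [abs_mul]; exact mul_le_mul_of_nonneg_right (hbσ' _) (abs_nonneg _)
  have h2 : |deriv σ zz * g2| ≤ Bσ' * |g2| := by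
    rw [abs_mul]; exact mul_le_mul_of_nonneg_right (hbσ' _) (abs_nonneg _)
  have h3 : |deriv σ zz * (Uv - d2j)| ≤ Bσ' * |Uv - d2j| := by
    rw [abs_mul]; exact mul_le_mul_of_nonneg_right (hbσ' _) (abs_nonneg _)
  have h4 : |(deriv σ zz - deriv σ a2j) * d2j|
      ≤ Cσ' * |ev| * |d2j| + Cσ' * |fv| * |d2j| := by
    rw [abs_mul]
    have h5 : |deriv σ zz - deriv σ a2j| ≤ Cσ' * (|ev| + |fv|) := by
      calc |deriv σ zz - deriv σ a2j| ≤ Cσ' * |zz - a2j| := hLσ' _ _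
        _ ≤ Cσ' * (|ev| + |fv|) := by
            rw [hza]; exact mul_le_mul_of_nonneg_left (abs_add_le _ _) hCs'
    calc |deriv σ zz - deriv σ a2j| * |d2j| ≤ (Cσ' * (|ev| + |fv|)) * |d2j| :=
          mul_le_mul_of_nonneg_right h5 (abs_nonneg _)
      _ = _ := by ring
  have habs : |deriv σ zz * sv - deriv σ a2j * d2j|
      ≤ Bσ' * |g1| + Bσ' * |g2| + Bσ' * |Uv - d2j|
        + Cσ' * |ev| * |d2j| + Cσ' * |fv| * |d2j| := by
    rw [hdecomp]
    have t1 := abs_add_le (deriv σ zz * g1 + deriv σ zz * g2 + deriv σ zz * (Uv - d2j))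
      ((deriv σ zz - deriv σ a2j) * d2j)
    have t2 := abs_add_le (deriv σ zz * g1 + deriv σ zz * g2) (deriv σ zz * (Uv - d2j))
    have t3 := abs_add_le (deriv σ zz * g1) (deriv σ zz * g2)
    linarith
  have hsq : (deriv σ zz * sv - deriv σ a2j * d2j) ^ 2
      ≤ 5 * (Bσ' ^ 2 * g1 ^ 2 + Bσ' ^ 2 * g2 ^ 2 + Bσ' ^ 2 * (Uv - d2j) ^ 2
          + Cσ' ^ 2 * ev ^ 2 * d2j ^ 2 + Cσ' ^ 2 * fv ^ 2 * d2j ^ 2) := by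
    have h5 := aux_five (Bσ' * |g1|) (Bσ' * |g2|) (Bσ' * |Uv - d2j|)
      (Cσ' * |ev| * |d2j|) (Cσ' * |fv| * |d2j|) _
      (mul_nonneg hB (abs_nonneg _)) (mul_nonneg hB (abs_nonneg _))
      (mul_nonneg hB (abs_nonneg _))
      (mul_nonneg (mul_nonneg hCs' (abs_nonneg _)) (abs_nonneg _))
      (mul_nonneg (mul_nonneg hCs' (abs_nonneg _)) (abs_nonneg _)) habs
    calc (deriv σ zz * sv - deriv σ a2j * d2j) ^ 2
        ≤ 5 * ((Bσ' * |g1|) ^ 2 + (Bσ' * |g2|) ^ 2 + (Bσ' * |Uv - d2j|) ^ 2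
            + (Cσ' * |ev| * |d2j|) ^ 2 + (Cσ' * |fv| * |d2j|) ^ 2) := h5
      _ = _ := by simp only [mul_pow, sq_abs]
  -- Cauchy-Schwarz bounds
  have hg1b : g1 ^ 2 ≤ (Bσ' ^ 2 * Rq) * A := by
    rw [hg1, hRq, hA]
    have hgeq : (∑ k, w2 k * (deriv σ (p k) * (w k - d1c k)))
        = ∑ k, (w2 k * deriv σ (p k)) * (w k - d1c k) :=
      Finset.sum_congr rfl fun k _ => by ring
    rw [hgeq]
    calc (∑ k, (w2 k * deriv σ (p k)) * (w k - d1c k)) ^ 2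
        ≤ (∑ k, (w2 k * deriv σ (p k)) ^ 2) * (∑ k, (w k - d1c k) ^ 2) :=
          Finset.sum_mul_sq_le_sq_mul_sq _ _ _
      _ ≤ (Bσ' ^ 2 * ∑ k, (w2 k) ^ 2) * (∑ k, (w k - d1c k) ^ 2) := by
          refine mul_le_mul_of_nonneg_right ?_
            (Finset.sum_nonneg fun _ _ => sq_nonneg _)
          rw [Finset.mul_sum]
          refine Finset.sum_le_sum fun k _ => ?_
          have hb : (deriv σ (p k)) ^ 2 ≤ Bσ' ^ 2 := by
            have h2 := pow_le_pow_left₀ (abs_nonneg (deriv σ (p k))) (hbσ' (p k)) 2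
            rwa [sq_abs] at h2
          calc (w2 k * deriv σ (p k)) ^ 2 = (w2 k) ^ 2 * (deriv σ (p k)) ^ 2 := by ring
            _ ≤ (w2 k) ^ 2 * Bσ' ^ 2 := mul_le_mul_of_nonneg_left hb (sq_nonneg _)
            _ = Bσ' ^ 2 * (w2 k) ^ 2 := by ring
  have hg2b : g2 ^ 2 ≤ Rq * (Cσ' ^ 2 * (E * D1)) := by
    rw [hg2, hRq, hE, hD1]
    calc (∑ k, w2 k * ((deriv σ (p k) - deriv σ (a1c k)) * d1c k)) ^ 2
        ≤ (∑ k, (w2 k) ^ 2) * (∑ k, ((deriv σ (p k) - deriv σ (a1c k)) * d1c k) ^ 2) :=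
          Finset.sum_mul_sq_le_sq_mul_sq _ _ _
      _ ≤ (∑ k, (w2 k) ^ 2) *
            (Cσ' ^ 2 * ((∑ k, (p k - a1c k) ^ 2) * (∑ k, (d1c k) ^ 2))) := by
          refine mul_le_mul_of_nonneg_left ?_
            (Finset.sum_nonneg fun _ _ => sq_nonneg _)
          calc ∑ k, ((deriv σ (p k) - deriv σ (a1c k)) * d1c k) ^ 2
              ≤ ∑ k, Cσ' ^ 2 * ((p k - a1c k) ^ 2 * (d1c k) ^ 2) := by
                refine Finset.sum_le_sum fun k _ => ?_
                have h : (deriv σ (p k) - deriv σ (a1c k)) ^ 2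
                    ≤ Cσ' ^ 2 * (p k - a1c k) ^ 2 := lip_sq (hLσ' (p k) (a1c k))
                calc ((deriv σ (p k) - deriv σ (a1c k)) * d1c k) ^ 2
                    = (deriv σ (p k) - deriv σ (a1c k)) ^ 2 * (d1c k) ^ 2 := by ring
                  _ ≤ (Cσ' ^ 2 * (p k - a1c k) ^ 2) * (d1c k) ^ 2 :=
                      mul_le_mul_of_nonneg_right h (sq_nonneg _)
                  _ = Cσ' ^ 2 * ((p k - a1c k) ^ 2 * (d1c k) ^ 2) := by ring
            _ = Cσ' ^ 2 * ∑ k, (p k - a1c k) ^ 2 * (d1c k) ^ 2 := by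
                rw [Finset.mul_sum]
            _ ≤ Cσ' ^ 2 * ((∑ k, (p k - a1c k) ^ 2) * (∑ k, (d1c k) ^ 2)) :=
                mul_le_mul_of_nonneg_left
                  (aux_sum_mul_le _ _ _ (fun _ _ => sq_nonneg _) (fun _ _ => sq_nonneg _))
                  (sq_nonneg _)
  have hevb : ev ^ 2 ≤ Rq * (Cσ ^ 2 * E) := by
    rw [hev, hRq, hE]
    calc (∑ k, w2 k * (σ (p k) - σ (a1c k))) ^ 2
        ≤ (∑ k, (w2 k) ^ 2) * (∑ k, (σ (p k) - σ (a1c k)) ^ 2) :=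
          Finset.sum_mul_sq_le_sq_mul_sq _ _ _
      _ ≤ (∑ k, (w2 k) ^ 2) * (Cσ ^ 2 * ∑ k, (p k - a1c k) ^ 2) := by
          refine mul_le_mul_of_nonneg_left ?_
            (Finset.sum_nonneg fun _ _ => sq_nonneg _)
          rw [Finset.mul_sum]
          refine Finset.sum_le_sum fun k _ => ?_
          exact lip_sq (hLσ (p k) (a1c k))
  -- combine
  have e1 : Bσ' ^ 2 * g1 ^ 2 ≤ C1 ^ 2 * (Rq * A) := by
    calc Bσ' ^ 2 * g1 ^ 2 ≤ Bσ' ^ 2 * ((Bσ' ^ 2 * Rq) * A) :=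
          mul_le_mul_of_nonneg_left hg1b (sq_nonneg _)
      _ = Bσ' ^ 4 * (Rq * A) := by ring
      _ ≤ C1 ^ 2 * (Rq * A) := mul_le_mul_of_nonneg_right hq2 (mul_nonneg hRq0 hA0)
  have e2 : Bσ' ^ 2 * g2 ^ 2 ≤ C1 ^ 2 * (Rq * (E * D1)) := by
    calc Bσ' ^ 2 * g2 ^ 2 ≤ Bσ' ^ 2 * (Rq * (Cσ' ^ 2 * (E * D1))) :=
          mul_le_mul_of_nonneg_left hg2b (sq_nonneg _)
      _ = (Bσ' ^ 2 * Cσ' ^ 2) * (Rq * (E * D1)) := by ring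
      _ ≤ C1 ^ 2 * (Rq * (E * D1)) := mul_le_mul_of_nonneg_right hq3
          (mul_nonneg hRq0 (mul_nonneg hE0 hD10))
  have e3 : Bσ' ^ 2 * (Uv - d2j) ^ 2 ≤ C1 ^ 2 * (Uv - d2j) ^ 2 :=
    mul_le_mul_of_nonneg_right hq4 (sq_nonneg _)
  have e4 : Cσ' ^ 2 * ev ^ 2 * d2j ^ 2 ≤ C1 ^ 2 * ((Rq * d2j ^ 2) * E) := by
    calc Cσ' ^ 2 * ev ^ 2 * d2j ^ 2 = (Cσ' ^ 2 * d2j ^ 2) * ev ^ 2 := by ring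
      _ ≤ (Cσ' ^ 2 * d2j ^ 2) * (Rq * (Cσ ^ 2 * E)) :=
          mul_le_mul_of_nonneg_left hevb (mul_nonneg (sq_nonneg _) (sq_nonneg _))
      _ = (Cσ' ^ 2 * Cσ ^ 2) * ((Rq * d2j ^ 2) * E) := by ring
      _ ≤ C1 ^ 2 * ((Rq * d2j ^ 2) * E) := mul_le_mul_of_nonneg_right hq5
          (mul_nonneg (mul_nonneg hRq0 (sq_nonneg _)) hE0)
  have e5 : Cσ' ^ 2 * fv ^ 2 * d2j ^ 2 ≤ C1 ^ 2 * (fv ^ 2 * d2j ^ 2) := by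
    calc Cσ' ^ 2 * fv ^ 2 * d2j ^ 2 = (fv ^ 2 * d2j ^ 2) * Cσ' ^ 2 := by ring
      _ ≤ (fv ^ 2 * d2j ^ 2) * C1 ^ 2 :=
          mul_le_mul_of_nonneg_left hq6 (mul_nonneg (sq_nonneg _) (sq_nonneg _))
      _ = C1 ^ 2 * (fv ^ 2 * d2j ^ 2) := by ring
  calc (deriv σ zz * sv - deriv σ a2j * d2j) ^ 2
      ≤ 5 * (Bσ' ^ 2 * g1 ^ 2 + Bσ' ^ 2 * g2 ^ 2 + Bσ' ^ 2 * (Uv - d2j) ^ 2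
          + Cσ' ^ 2 * ev ^ 2 * d2j ^ 2 + Cσ' ^ 2 * fv ^ 2 * d2j ^ 2) := hsq
    _ ≤ 5 * (C1 ^ 2 * (Rq * A) + C1 ^ 2 * (Uv - d2j) ^ 2 + C1 ^ 2 * (Rq * (E * D1))
          + C1 ^ 2 * ((Rq * d2j ^ 2) * E) + C1 ^ 2 * (fv ^ 2 * d2j ^ 2)) := by
        linarith [e1, e2, e3, e4, e5]
    _ = 5 * C1 ^ 2 * (Rq * A + (Uv - d2j) ^ 2 + Rq * (E * D1)
          + (Rq * d2j ^ 2) * E + fv ^ 2 * d2j ^ 2) := by ring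

set_option maxHeartbeats 1000000 in
private lemma A7_col {M : ℕ} (σ : ℝ → ℝ) (Cσ Cσ' Bσ' : ℝ)
    (hLσ : ∀ z₁ z₂ : ℝ, |σ z₁ - σ z₂| ≤ Cσ * |z₁ - z₂|)
    (hbσ' : ∀ z : ℝ, |deriv σ z| ≤ Bσ')
    (hLσ' : ∀ z₁ z₂ : ℝ, |deriv σ z₁ - deriv σ z₂| ≤ Cσ' * |z₁ - z₂|)
    (W2 : Fin M → Fin M → ℝ) (b2 : Fin M → ℝ)
    (p w a1c a2c d1c d2c : Fin M → ℝ) :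
    (∑ j, (deriv σ ((∑ k, W2 j k * σ (p k)) + b2 j)
        * (∑ k, W2 j k * (deriv σ (p k) * w k)) - deriv σ (a2c j) * d2c j) ^ 2)
      ≤ 5 * constC1 Cσ Cσ' Bσ' ^ 2 *
          ((∑ j, ∑ k, (W2 j k) ^ 2) * (∑ k, (w k - d1c k) ^ 2)
            + (∑ j, ((∑ k, W2 j k * (deriv σ (a1c k) * d1c k)) - d2c j) ^ 2)
            + (∑ j, ∑ k, (W2 j k) ^ 2) * ((∑ k, (d1c k) ^ 2) + (∑ k, (d2c k) ^ 2)) *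
                (∑ k, (p k - a1c k) ^ 2)
            + (∑ k, (d2c k) ^ 2) *
                (∑ j, ((∑ k, W2 j k * σ (a1c k)) + b2 j - a2c j) ^ 2)) := by
  have hB : 0 ≤ Bσ' := (abs_nonneg _).trans (hbσ' 0)
  set C1 := constC1 Cσ Cσ' Bσ' with hC1
  have hC1sq : 0 ≤ 5 * C1 ^ 2 := by positivity
  have hstep := Finset.sum_le_sum (fun j (_ : j ∈ Finset.univ) =>
    A7_entry σ Cσ Cσ' Bσ' hLσ hbσ' hLσ' (W2 j) (b2 j) (a2c j) (d2c j) p w a1c d1c)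
  refine hstep.trans ?_
  rw [← Finset.mul_sum]
  have hE0 : (0:ℝ) ≤ ∑ k, (p k - a1c k) ^ 2 :=
    Finset.sum_nonneg fun _ _ => sq_nonneg _
  have haux1 : ∑ j, (∑ k, (W2 j k) ^ 2) * (d2c j) ^ 2
      ≤ (∑ j, ∑ k, (W2 j k) ^ 2) * (∑ k, (d2c k) ^ 2) :=
    aux_sum_mul_le _ _ _ (fun _ _ => Finset.sum_nonneg fun _ _ => sq_nonneg _)
      (fun _ _ => sq_nonneg _)
  have haux2 : ∑ j, ((∑ k, W2 j k * σ (a1c k)) + b2 j - a2c j) ^ 2 * (d2c j) ^ 2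
      ≤ (∑ j, ((∑ k, W2 j k * σ (a1c k)) + b2 j - a2c j) ^ 2) * (∑ k, (d2c k) ^ 2) :=
    aux_sum_mul_le _ _ _ (fun _ _ => sq_nonneg _) (fun _ _ => sq_nonneg _)
  refine mul_le_mul_of_nonneg_left ?_ hC1sq
  have hsum : ∑ j, ((∑ k, (W2 j k) ^ 2) * (∑ k, (w k - d1c k) ^ 2)
        + ((∑ k, W2 j k * (deriv σ (a1c k) * d1c k)) - d2c j) ^ 2
        + (∑ k, (W2 j k) ^ 2) * ((∑ k, (p k - a1c k) ^ 2) * (∑ k, (d1c k) ^ 2))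
        + ((∑ k, (W2 j k) ^ 2) * (d2c j) ^ 2) * (∑ k, (p k - a1c k) ^ 2)
        + ((∑ k, W2 j k * σ (a1c k)) + b2 j - a2c j) ^ 2 * (d2c j) ^ 2)
      = (∑ j, ∑ k, (W2 j k) ^ 2) * (∑ k, (w k - d1c k) ^ 2)
        + (∑ j, ((∑ k, W2 j k * (deriv σ (a1c k) * d1c k)) - d2c j) ^ 2)
        + (∑ j, ∑ k, (W2 j k) ^ 2) * ((∑ k, (p k - a1c k) ^ 2) * (∑ k, (d1c k) ^ 2))
        + (∑ j, (∑ k, (W2 j k) ^ 2) * (d2c j) ^ 2) * (∑ k, (p k - a1c k) ^ 2)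
        + ∑ j, ((∑ k, W2 j k * σ (a1c k)) + b2 j - a2c j) ^ 2 * (d2c j) ^ 2 := by
    simp only [Finset.sum_add_distrib, ← Finset.sum_mul]
  rw [hsum]
  nlinarith [haux2, mul_le_mul_of_nonneg_right haux1 hE0]


/-- **Inequality (A.7)** (summed squared bound on the first-derivative output
mismatch): `‖T_{2i}‖_F² = Σ_n ‖T_{2i}[n]‖₂²` is bounded by `5C₁²` times the sum of the
four squared mismatch terms. -/
theorem first_derivative_output_mismatch_summed_bound
    {d M N : ℕ} (hd : 0 < d) (hM : 0 < M) (hN : 0 < N)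
    (σ : ℝ → ℝ) (Cσ Cσ' Bσ' : ℝ)
    (hLσ : ∀ z₁ z₂ : ℝ, |σ z₁ - σ z₂| ≤ Cσ * |z₁ - z₂|)
    (hbσ' : ∀ z : ℝ, |deriv σ z| ≤ Bσ')
    (hLσ' : ∀ z₁ z₂ : ℝ, |deriv σ z₁ - deriv σ z₂| ≤ Cσ' * |z₁ - z₂|)
    (W1 : Fin M → Fin d → ℝ) (b1 : Fin M → ℝ)
    (W2 : Fin M → Fin M → ℝ) (b2 : Fin M → ℝ)
    (X : Fin d → Fin N → ℝ)
    (a1 a2 : Fin M → Fin N → ℝ)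
    (d1 d2 : Fin d → Fin M → Fin N → ℝ)
    (i : Fin d) :
    (∑ n, esq (T2col σ W1 b1 W2 b2 (fun i' => X i' n) a2 d2 i n))
      ≤ 5 * constC1 Cσ Cσ' Bσ' ^ 2 *
          ∑ n,
            ((∑ j, ∑ k, (W2 j k) ^ 2) * esq (fun k => W1 k i - d1 i k n)
              + esq (fun j => (∑ k, W2 j k * (deriv σ (a1 k n) * d1 i k n)) - d2 i j n)
              + (∑ j, ∑ k, (W2 j k) ^ 2) *
                  (esq (fun k => d1 i k n) + esq (fun k => d2 i k n)) *
                  esq (fun k => (∑ i', W1 k i' * X i' n) + b1 k - a1 k n)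
              + esq (fun k => d2 i k n) *
                  esq (fun j => (∑ k, W2 j k * σ (a1 k n)) + b2 j - a2 j n)) := by
  rw [Finset.mul_sum]
  refine Finset.sum_le_sum fun n _ => ?_
  exact A7_col σ Cσ Cσ' Bσ' hLσ hbσ' hLσ' W2 b2
    (fun k => (∑ i', W1 k i' * X i' n) + b1 k) (fun k => W1 k i)
    (fun k => a1 k n) (fun j => a2 j n) (fun k => d1 i k n) (fun k => d2 i k n)
end
end
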